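/- Let $a_1,\ldots,a_n$ be distinct elements of a field $F$, $u_i = \prod_{j\neq i}(a_i-a_j)^{-1}$. Let $V_n = (a_j^{i})_{0\leq i\leq n-1, 1\leq j\leq n}$ be the Vandermonde matrix and $U = \mathrm{diag}(u_1,\ldots,u_n)$. Then the Hankel matrix $V_n U V_n^{\mathrm{T}}$, whose $(i,j)$ entry is $\sum_{r=1}^n u_r a_r^{i+j}$ for $0 \leq i,j \leq n-1$, equals the matrix with $(i,j)$ entry $e_{i+j-(n-1)}$ when $i+j \geq n-1$ and $0$ otherwise, where $e_0 = 1$ and $e_m = -\sum_{s=0}^{m-1} e_s c_{m-s}$, with $c_j$ the coefficients of $\prod_{i=1}^n(x-a_i) = \sum_{j=0}^n c_j x^{n-j}$. -/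

import Mathlib

open Polynomial in
/-- The Hankel matrix `V_n U V_nᵀ` with `(i,j)` entry `∑_r u_r a_r^{i+j}` equals the
anti-triangular matrix with entries `e_{i+j-(n-1)}` for `i+j ≥ n-1` and `0` otherwise. -/
theorem stmt_9 {F : Type*} [Field F] (n : ℕ)
    (a : Fin n → F) (ha : Function.Injective a)
    (u : Fin n → F)
    (hu : ∀ i, u i = (∏ j ∈ Finset.univ.erase i, (a i - a j))⁻¹)
    (c e : ℕ → F)
    (hc : (∏ i : Fin n, (X - C (a i))) =
      ∑ j ∈ Finset.range (n + 1), Polynomial.C (c j) * X ^ (n - j))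
    (he0 : e 0 = 1)
    (he : ∀ m, 1 ≤ m → e m = -∑ s ∈ Finset.range m, e s * c (m - s))
    (Vn : Matrix (Fin n) (Fin n) F)
    (hVn : ∀ i j, Vn i j = a j ^ (i : ℕ)) :
    Vn * Matrix.diagonal u * Vn.transpose =
      Matrix.of fun i j : Fin n =>
        if n - 1 ≤ (i : ℕ) + (j : ℕ) then e ((i : ℕ) + (j : ℕ) - (n - 1)) else 0 := by
  rcases Nat.eq_zero_or_pos n with hn | hn
  · subst hn; ext i j; exact i.elim0
  have hprod_ne : ∀ i : Fin n, (∏ j ∈ Finset.univ.erase i, (a i - a j)) ≠ 0 := by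
    intro i
    rw [Finset.prod_ne_zero_iff]
    intro j hj
    exact sub_ne_zero.mpr fun h => (Finset.mem_erase.mp hj).1 (ha h).symm
  have hu' : ∀ i : Fin n, u i * ∏ j ∈ Finset.univ.erase i, (a i - a j) = 1 := by
    intro i; rw [hu i, inv_mul_cancel₀ (hprod_ne i)]
  set S : ℕ → F := fun m => ∑ r : Fin n, u r * a r ^ m with hS
  -- key1 : initial values
  have key1 : ∀ m, m < n → S m = if m = n - 1 then 1 else 0 := by
    intro m hm
    set Q : F[X] := ∑ r : Fin n, C (u r * a r ^ m) * Lagrange.nodal (Finset.univ.erase r) a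
      with hQdef
    have hQ : Q = X ^ m := by
      apply Polynomial.eq_of_degrees_lt_of_eval_index_eq (s := Finset.univ) (v := a)
        (Set.injOn_of_injective ha)
      · apply lt_of_le_of_lt (Polynomial.degree_sum_le _ _)
        rw [Finset.sup_lt_iff (by exact_mod_cast WithBot.bot_lt_coe _)]
        intro r _
        refine lt_of_le_of_lt (Polynomial.degree_mul_le _ _) ?_
        refine lt_of_le_of_lt (add_le_add_left Polynomial.degree_C_le _) ?_
        rw [zero_add, Lagrange.degree_nodal]
        simp only [Finset.card_erase_of_mem (Finset.mem_univ r), Finset.card_univ,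
          Fintype.card_fin]
        exact_mod_cast (by omega : n - 1 < n)
      · rw [Polynomial.degree_X_pow]
        simp only [Finset.card_univ, Fintype.card_fin]
        exact_mod_cast hm
      · intro i _
        rw [Polynomial.eval_pow, Polynomial.eval_X, hQdef, Polynomial.eval_finset_sum,
          Finset.sum_eq_single i]
        · rw [Polynomial.eval_mul, Polynomial.eval_C, Lagrange.eval_nodal,
            mul_comm (u i) _, mul_assoc, hu' i, mul_one]
        · intro r _ hr
          rw [Polynomial.eval_mul, Lagrange.eval_nodal,
            Finset.prod_eq_zero (Finset.mem_erase.mpr ⟨hr.symm, Finset.mem_univ i⟩)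
              (sub_self (a i)), mul_zero]
        · intro h; exact absurd (Finset.mem_univ i) h
    have hcoe := congrArg (fun p => Polynomial.coeff p (n - 1)) hQ
    simp only [hQdef, Polynomial.finset_sum_coeff, Polynomial.coeff_C_mul,
      Polynomial.coeff_X_pow] at hcoe
    have hco : ∀ r : Fin n, (Lagrange.nodal (Finset.univ.erase r) a).coeff (n - 1) = 1 := by
      intro r
      have hmonic := Lagrange.nodal_monic (s := Finset.univ.erase r) (v := a)
      have hdeg : (Lagrange.nodal (Finset.univ.erase r) a).natDegree = n - 1 := by
        rw [Lagrange.natDegree_nodal, Finset.card_erase_of_mem (Finset.mem_univ r),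
          Finset.card_univ, Fintype.card_fin]
      rw [← hdeg]
      exact hmonic.coeff_natDegree
    simp only [hco, mul_one] at hcoe
    show (∑ r : Fin n, u r * a r ^ m) = _
    rw [hcoe]
    by_cases h : m = n - 1 <;> simp [h]
    omega
  -- c 0 = 1
  have hmonicP : (∏ i : Fin n, (X - C (a i)) : F[X]).Monic :=
    monic_prod_of_monic _ _ fun i _ => monic_X_sub_C (a i)
  have hdegP : (∏ i : Fin n, (X - C (a i)) : F[X]).natDegree = n := by
    rw [Polynomial.natDegree_prod _ _ fun i _ => X_sub_C_ne_zero (a i)]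
    simp
  have hc0 : c 0 = 1 := by
    have h := congrArg (fun p => Polynomial.coeff p n) hc
    simp only [Polynomial.finset_sum_coeff, Polynomial.coeff_C_mul,
      Polynomial.coeff_X_pow] at h
    have h1 := hmonicP.coeff_natDegree
    rw [hdegP] at h1
    rw [h1] at h
    rw [Finset.sum_eq_single 0 (fun j hj hj0 => by
        rw [if_neg, mul_zero]
        simp only [Finset.mem_range] at hj; omega)
      (fun h' => absurd (Finset.mem_range.mpr (by omega)) h')] at h
    simpa using h.symm
  have hroot : ∀ r : Fin n, ∑ j ∈ Finset.range (n + 1), c j * a r ^ (n - j) = 0 := by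
    intro r
    have h := congrArg (Polynomial.eval (a r)) hc
    rw [Polynomial.eval_prod, Finset.prod_eq_zero (Finset.mem_univ r) (by simp),
      Polynomial.eval_finset_sum] at h
    simpa using h.symm
  have hsplit : Finset.range (n + 1) = insert 0 (Finset.Icc 1 n) := by
    ext x; simp [Finset.mem_Icc]; omega
  have hpow : ∀ r : Fin n, a r ^ n = -∑ j ∈ Finset.Icc 1 n, c j * a r ^ (n - j) := by
    intro r
    have h := hroot r
    rw [hsplit, Finset.sum_insert (by simp)] at h
    rw [hc0] at h
    simp only [Nat.sub_zero, one_mul] at h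
    linear_combination h
  -- key2 : recurrence
  have key2 : ∀ k, n ≤ k → S k = -∑ j ∈ Finset.Icc 1 n, c j * S (k - j) := by
    intro k hk
    have step : ∀ r : Fin n, u r * a r ^ k =
        -∑ j ∈ Finset.Icc 1 n, c j * (u r * a r ^ (k - j)) := by
      intro r
      have hak : a r ^ k = a r ^ (k - n) * a r ^ n := by
        rw [← pow_add]; congr 1; omega
      rw [hak, hpow r]
      simp only [mul_neg, neg_mul, Finset.mul_sum, neg_inj]
      apply Finset.sum_congr rfl
      intro j hj
      simp only [Finset.mem_Icc] at hj
      rw [show k - j = (k - n) + (n - j) by omega, pow_add]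
      ring
    show (∑ r : Fin n, u r * a r ^ k) = _
    rw [Finset.sum_congr rfl fun r _ => step r]
    simp only [Finset.sum_neg_distrib, neg_inj]
    rw [Finset.sum_comm]
    exact Finset.sum_congr rfl fun j _ => by rw [Finset.mul_sum]
  -- key3 : main identity
  have key3 : ∀ k, k ≤ 2 * n - 2 →
      S k = if n - 1 ≤ k then e (k - (n - 1)) else 0 := by
    intro k
    induction k using Nat.strong_induction_on with
    | _ k ih =>
      intro hk
      by_cases hkn : k < n
      · rw [key1 k hkn]
        by_cases h : k = n - 1
        · rw [if_pos h, if_pos (by omega), h, Nat.sub_self, he0]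
        · rw [if_neg h, if_neg (by omega)]
      · push_neg at hkn
        rw [key2 k hkn]
        have hm1 : 1 ≤ k - (n - 1) := by omega
        have hm2 : k - (n - 1) ≤ n - 1 := by omega
        rw [if_pos (by omega), he _ hm1]
        set m := k - (n - 1) with hmdef
        rw [neg_inj]
        have hsub : ∀ j ∈ Finset.Icc 1 n, c j * S (k - j) =
            if j ≤ m then c j * e (m - j) else 0 := by
          intro j hj
          simp only [Finset.mem_Icc] at hj
          rw [ih (k - j) (by omega) (by omega)]
          by_cases h : j ≤ m
          · rw [if_pos (by omega), if_pos h]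
            congr 2; omega
          · rw [if_neg (by omega), mul_zero, if_neg h]
        rw [Finset.sum_congr rfl hsub]
        rw [show Finset.Icc 1 n = Finset.Icc 1 m ∪ Finset.Icc (m+1) n from by
          ext x; simp only [Finset.mem_Icc, Finset.mem_union]; omega]
        rw [Finset.sum_union (by
          rw [Finset.disjoint_left]; intro x hx hx'
          simp only [Finset.mem_Icc] at hx hx'; omega)]
        rw [Finset.sum_eq_zero (s := Finset.Icc (m+1) n) (fun j hj => by
          simp only [Finset.mem_Icc] at hj
          rw [if_neg (by omega)]), add_zero]
        rw [Finset.sum_congr rfl (fun j hj => by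
          simp only [Finset.mem_Icc] at hj
          rw [if_pos hj.2])]
        -- ∑ s ∈ range m, e s * c (m - s) = ∑ j ∈ Icc 1 m, c j * e (m - j)
        apply Finset.sum_nbij' (i := fun j => m - j) (j := fun s => m - s)
        · intro j hj; simp only [Finset.mem_Icc] at hj
          simp only [Finset.mem_range]; omega
        · intro s hs; simp only [Finset.mem_range] at hs
          simp only [Finset.mem_Icc]; omega
        · intro j hj; simp only [Finset.mem_Icc] at hj; omega
        · intro s hs; simp only [Finset.mem_range] at hs; omega
        · intro j hj; simp only [Finset.mem_Icc] at hj
          rw [show m - (m - j) = j by omega]; ring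
  -- assemble
  ext i j
  have hij : (i : ℕ) + (j : ℕ) ≤ 2 * n - 2 := by
    have := i.isLt; have := j.isLt; omega
  have hentry : (Vn * Matrix.diagonal u * Vn.transpose) i j = S ((i : ℕ) + (j : ℕ)) := by
    rw [Matrix.mul_apply]
    simp only [Matrix.mul_diagonal, Matrix.transpose_apply, hVn, hS]
    apply Finset.sum_congr rfl
    intro r _
    rw [pow_add]; ring
  rw [hentry, key3 _ hij]
  simp
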